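/- Let A be an integrally closed domain whose fraction field is algebraically closed. Let {fᵢ : Yᵢ ⟶ Spec A}_{i ∈ ι} be a family of finite morphisms of schemes which is jointly surjective (every point of Spec A lies in the image of some fᵢ). Then there exist an index i and a morphism s : Spec A ⟶ Yᵢ with fᵢ ∘ s = id. -/

import Mathlib

open CategoryTheory AlgebraicGeometry

universe u

lemma key_section {A B : Type u} [CommRing A] [IsDomain A] [IsIntegrallyClosed A]
    [IsAlgClosed (FractionRing A)] [CommRing B] (g : A →+* B) (hg : g.Finite)
    (q : Ideal B) [q.IsPrime] (hq : q.comap g = ⊥) :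
    ∃ ψ : B →+* A, ψ.comp g = RingHom.id A := by
  letI : Algebra A B := g.toAlgebra
  haveI : Module.Finite A B := hg
  letI : Algebra A (B ⧸ q) := Ideal.Quotient.algebra A
  haveI : IsScalarTower A B (B ⧸ q) := IsScalarTower.of_algebraMap_eq fun _ => rfl
  haveI : Module.Finite A (B ⧸ q) :=
    Module.Finite.of_surjective (IsScalarTower.toAlgHom A B (B ⧸ q)).toLinearMap
      Ideal.Quotient.mk_surjective
  haveI : Algebra.IsIntegral A (B ⧸ q) := Algebra.IsIntegral.of_finite A (B ⧸ q)
  have hinj : Function.Injective (algebraMap A (B ⧸ q)) := by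
    rw [RingHom.injective_iff_ker_eq_bot]
    show RingHom.ker ((Ideal.Quotient.mk q).comp g) = ⊥
    rw [← RingHom.comap_ker, Ideal.mk_ker, hq]
  haveI : FaithfulSMul A (B ⧸ q) :=
    (faithfulSMul_iff_algebraMap_injective _ _).mpr hinj
  set K := FractionRing A
  set L := FractionRing (B ⧸ q)
  haveI : FaithfulSMul A L := (faithfulSMul_iff_algebraMap_injective _ _).mpr <| by
    rw [IsScalarTower.algebraMap_eq A (B ⧸ q) L]
    exact (IsFractionRing.injective (B ⧸ q) L).comp hinj
  letI : Algebra K L := FractionRing.liftAlgebra A L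
  haveI : IsScalarTower A K L := FractionRing.isScalarTower_liftAlgebra A L
  haveI : Algebra.IsAlgebraic A L := by
    haveI : Module.IsTorsionFree A L := FaithfulSMul.to_isTorsionFree A L
    rw [← IsFractionRing.isAlgebraic_iff' A (B ⧸ q) L]
    exact Algebra.IsIntegral.isAlgebraic
  haveI : Algebra.IsAlgebraic K L :=
    Algebra.IsAlgebraic.extendScalars (S := K) (FaithfulSMul.algebraMap_injective A K)
  haveI : Algebra.IsIntegral K L := Algebra.IsAlgebraic.isIntegral
  have hsurj : Function.Surjective (algebraMap K L) :=
    IsAlgClosed.algebraMap_bijective_of_isIntegral.2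
  let e : K ≃+* L := RingEquiv.ofBijective (algebraMap K L)
    ⟨(algebraMap K L).injective, hsurj⟩
  let halg : (B ⧸ q) →ₐ[A] K :=
    { toRingHom := e.symm.toRingHom.comp (algebraMap (B ⧸ q) L)
      commutes' := fun a => by
        show e.symm (algebraMap (B ⧸ q) L (algebraMap A (B ⧸ q) a)) = algebraMap A K a
        rw [← IsScalarTower.algebraMap_apply A (B ⧸ q) L,
          IsScalarTower.algebraMap_apply A K L]
        exact e.symm_apply_apply _ }
  have hmem : ∀ c, halg c ∈ integralClosure A K := fun c =>
    IsIntegral.map halg (Algebra.IsIntegral.isIntegral c)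
  let ψC : (B ⧸ q) →ₐ[A] A :=
    ((Algebra.botEquivOfInjective (IsFractionRing.injective A K)).toAlgHom.comp
      (Subalgebra.equivOfEq _ _ (IsIntegrallyClosed.integralClosure_eq_bot A K)).toAlgHom).comp
      (halg.codRestrict (integralClosure A K) hmem)
  refine ⟨ψC.toRingHom.comp (Ideal.Quotient.mk q), ?_⟩
  ext a
  show ψC (algebraMap A (B ⧸ q) a) = a
  rw [AlgHom.commutes]
  exact rfl


/-- Let `A` be an integrally closed domain whose fraction field is algebraically closed,
and let `{fᵢ : Yᵢ ⟶ Spec A}` be a jointly surjective family of finite morphisms of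
schemes.  Then some `fᵢ` admits a section. -/
theorem exists_section_of_jointly_surjective_finite_family
    {A : Type u} [CommRing A] [IsDomain A] [IsIntegrallyClosed A]
    [IsAlgClosed (FractionRing A)]
    {ι : Type*} (Y : ι → Scheme.{u}) (f : ∀ i, Y i ⟶ Spec (CommRingCat.of A))
    (hfin : ∀ i, IsFinite (f i))
    (hsurj : ∀ x : Spec (CommRingCat.of A), ∃ (i : ι) (y : Y i), (f i).base y = x) :
    ∃ (i : ι) (s : Spec (CommRingCat.of A) ⟶ Y i),
      s ≫ f i = 𝟙 (Spec (CommRingCat.of A)) := by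
  haveI hd : IsDomain ↥(CommRingCat.of A) := ‹IsDomain A›
  haveI : IsIntegrallyClosed ↥(CommRingCat.of A) := ‹IsIntegrallyClosed A›
  haveI : IsAlgClosed (FractionRing ↥(CommRingCat.of A)) := ‹IsAlgClosed (FractionRing A)›
  obtain ⟨i, y, hy⟩ := hsurj ⟨⊥, Ideal.bot_prime⟩
  haveI := hfin i
  haveI : IsAffine (Y i) := isAffine_of_isAffineHom (f i)
  have hfinring : RingHom.Finite ((f i).appTop.hom) :=
    (f i).finite_appTop
  set B := Γ(Y i, ⊤)
  let g : CommRingCat.of A ⟶ B := (Scheme.ΓSpecIso (CommRingCat.of A)).inv ≫ (f i).appTop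
  have hg : RingHom.Finite g.hom := by
    exact RingHom.Finite.comp hfinring
      (RingHom.Finite.of_surjective _ (ConcreteCategory.bijective_of_isIso
        (Scheme.ΓSpecIso (CommRingCat.of A)).inv).2)
  have hfi : f i = (Y i).isoSpec.hom ≫ Spec.map g := by
    rw [show Spec.map g = Spec.map ((f i).appTop) ≫ Spec.map (Scheme.ΓSpecIso _).inv from
      Spec.map_comp _ _, ← Category.assoc, Scheme.isoSpec_hom_naturality,
      Category.assoc, ← Scheme.isoSpec_Spec_inv, Iso.hom_inv_id, Category.comp_id]
  let q : PrimeSpectrum B := (Y i).isoSpec.hom.base y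
  haveI : q.asIdeal.IsPrime := q.isPrime
  have hq : q.asIdeal.comap g.hom = ⊥ := by
    have : (Spec.map g).base q = ⟨⊥, Ideal.bot_prime⟩ := by
      rw [← hy, hfi]; rfl
    exact congrArg PrimeSpectrum.asIdeal this
  obtain ⟨ψ, hψ⟩ := key_section g.hom hg q.asIdeal hq
  refine ⟨i, Spec.map (CommRingCat.ofHom ψ) ≫ (Y i).isoSpec.inv, ?_⟩
  rw [hfi, Category.assoc, Iso.inv_hom_id_assoc, ← Spec.map_comp]
  have : g ≫ CommRingCat.ofHom ψ = 𝟙 (CommRingCat.of A) := by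
    ext a
    exact congrFun (congrArg DFunLike.coe hψ) a
  rw [this, Spec.map_id]
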